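/- Let A, B be real numbers with A ≥ 2 and B ≥ 1, and define f(x) = (1 + x/(A−x))^{A−x} · (1 − x/(B+x))^{B+x} for x ∈ [0,1]. Then f is decreasing on [0,1], and in particular f(x) ≥ f(1) = (1 + 1/(A−1))^{A−1} · (1 − 1/(B+1))^{B+1} ≥ 1/2 for all x ∈ [0,1]. -/

import Mathlib

open Real Set

private lemma Fderiv (A B : ℝ) (x : ℝ) (hAx : 0 < A - x) (hBx : 0 < B + x) :
    HasDerivAt (fun x : ℝ => (A - x) * (Real.log A - Real.log (A - x))
      + (B + x) * (Real.log B - Real.log (B + x)))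
      (Real.log (A - x) - Real.log A + Real.log B - Real.log (B + x)) x := by
  have h1 : HasDerivAt (fun x : ℝ => A - x) (-1) x := by
    simpa using (hasDerivAt_id x).const_sub A
  have h1l : HasDerivAt (fun x : ℝ => Real.log (A - x)) (-1 / (A - x)) x :=
    h1.log hAx.ne'
  have h2 : HasDerivAt (fun x : ℝ => Real.log A - Real.log (A - x))
      (-(-1 / (A - x))) x := h1l.const_sub _
  have hP1 := h1.mul h2
  have h3 : HasDerivAt (fun x : ℝ => B + x) 1 x := by
    simpa using (hasDerivAt_id x).const_add B
  have h3l : HasDerivAt (fun x : ℝ => Real.log (B + x)) (1 / (B + x)) x :=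
    h3.log hBx.ne'
  have h4 : HasDerivAt (fun x : ℝ => Real.log B - Real.log (B + x))
      (-(1 / (B + x))) x := h3l.const_sub _
  have hP2 := h3.mul h4
  have := hP1.add hP2
  refine this.congr_deriv ?_
  have ea : (A - x) * (1 / (A - x)) = 1 := by field_simp
  have eb : (B + x) * (1 / (B + x)) = 1 := by field_simp
  linear_combination ea - eb

theorem f_antitone_and_ge_half (A B : ℝ) (hA : 2 ≤ A) (hB : 1 ≤ B)
    (f : ℝ → ℝ)
    (hf : ∀ x, f x = (1 + x / (A - x)) ^ (A - x) * (1 - x / (B + x)) ^ (B + x)) :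
    AntitoneOn f (Set.Icc 0 1) ∧
      f 1 = (1 + 1 / (A - 1)) ^ (A - 1) * (1 - 1 / (B + 1)) ^ (B + 1) ∧
      (1 : ℝ) / 2 ≤ f 1 ∧
      ∀ x ∈ Set.Icc (0 : ℝ) 1, f 1 ≤ f x := by
  have hA0 : (0 : ℝ) < A := by linarith
  have hB0 : (0 : ℝ) < B := by linarith
  set F : ℝ → ℝ := fun x => (A - x) * (Real.log A - Real.log (A - x))
      + (B + x) * (Real.log B - Real.log (B + x)) with hF
  -- positivity on the interval
  have hAx : ∀ x ∈ Icc (0:ℝ) 1, 0 < A - x := fun x hx => by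
    have := hx.2; linarith
  have hBx : ∀ x ∈ Icc (0:ℝ) 1, 0 < B + x := fun x hx => by
    have := hx.1; linarith
  -- f = exp ∘ F on the interval
  have hfe : ∀ x ∈ Icc (0:ℝ) 1, f x = Real.exp (F x) := by
    intro x hx
    have hax := hAx x hx
    have hbx := hBx x hx
    have e1 : 1 + x / (A - x) = A / (A - x) := by field_simp; ring
    have e2 : 1 - x / (B + x) = B / (B + x) := by field_simp; ring
    have p1 : (0:ℝ) < A / (A - x) := div_pos hA0 hax
    have p2 : (0:ℝ) < B / (B + x) := div_pos hB0 hbx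
    rw [hf x, e1, e2, Real.rpow_def_of_pos p1, Real.rpow_def_of_pos p2,
      Real.log_div hA0.ne' hax.ne', Real.log_div hB0.ne' hbx.ne', ← Real.exp_add]
    congr 1
    ring
  -- F is antitone on [0,1]
  have hFanti : AntitoneOn F (Icc (0:ℝ) 1) := by
    apply antitoneOn_of_hasDerivWithinAt_nonpos (convex_Icc 0 1)
      (f' := fun x => Real.log (A - x) - Real.log A + Real.log B - Real.log (B + x))
    · intro x hx
      exact ((Fderiv A B x (hAx x hx) (hBx x hx)).continuousAt).continuousWithinAt
    · intro x hx
      rw [interior_Icc] at hx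
      exact (Fderiv A B x (hAx x (Ioo_subset_Icc_self hx))
        (hBx x (Ioo_subset_Icc_self hx))).hasDerivWithinAt
    · intro x hx
      rw [interior_Icc] at hx
      have hx0 : 0 ≤ x := hx.1.le
      have h1 : Real.log (A - x) ≤ Real.log A :=
        Real.log_le_log (hAx x (Ioo_subset_Icc_self hx)) (by linarith)
      have h2 : Real.log B ≤ Real.log (B + x) :=
        Real.log_le_log hB0 (by linarith)
      linarith
  have hfanti : AntitoneOn f (Icc (0:ℝ) 1) := by
    intro x hx y hy hxy
    rw [hfe x hx, hfe y hy]
    exact Real.exp_le_exp.2 (hFanti hx hy hxy)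
  refine ⟨hfanti, hf 1, ?_, fun x hx => hfanti hx (by norm_num) hx.2⟩
  -- f 1 ≥ 1/2
  have hA1 : (0:ℝ) < A - 1 := by linarith
  -- first factor ≥ 2 by Bernoulli
  have hfac1 : (2:ℝ) ≤ (1 + 1 / (A - 1)) ^ (A - 1) := by
    have hs : (-1 : ℝ) ≤ 1 / (A - 1) := by
      have : (0:ℝ) ≤ 1 / (A - 1) := by positivity
      linarith
    have := one_add_mul_self_le_rpow_one_add hs (p := A - 1) (by linarith)
    have hne : A - 1 ≠ 0 := hA1.ne'
    rw [mul_one_div, div_self hne] at this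
    linarith
  -- second factor ≥ 1/4 via monotone G
  have hfac2 : (1/4 : ℝ) ≤ (1 - 1 / (B + 1)) ^ (B + 1) := by
    set G : ℝ → ℝ := fun t => (t + 1) * (Real.log t - Real.log (t + 1)) with hG
    have hGd : ∀ t : ℝ, 0 < t → HasDerivAt G
        (Real.log t - Real.log (t + 1) + 1 / t) t := by
      intro t ht
      have h1 : HasDerivAt (fun t : ℝ => t + 1) 1 t := by
        simpa using (hasDerivAt_id t).add_const 1
      have hlt : HasDerivAt Real.log (1 / t) t := by
        simpa [one_div] using Real.hasDerivAt_log ht.ne'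
      have hlt1 : HasDerivAt (fun t : ℝ => Real.log (t + 1)) (1 / (t + 1)) t :=
        h1.log (by linarith)
      have h2 : HasDerivAt (fun t : ℝ => Real.log t - Real.log (t + 1))
          (1 / t - 1 / (t + 1)) t := hlt.sub hlt1
      have := h1.mul h2
      refine this.congr_deriv ?_
      have et : (t + 1) * (1 / t) = 1 + 1 / t := by field_simp
      have et1 : (t + 1) * (1 / (t + 1)) = 1 := by field_simp
      linear_combination et - et1
    have hGmono : MonotoneOn G (Icc (1:ℝ) B) := by
      apply monotoneOn_of_hasDerivWithinAt_nonneg (convex_Icc 1 B)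
        (f' := fun t => Real.log t - Real.log (t + 1) + 1 / t)
      · intro t ht
        exact ((hGd t (by linarith [ht.1])).continuousAt).continuousWithinAt
      · intro t ht
        have ht' := interior_subset ht
        exact (hGd t (by linarith [ht'.1])).hasDerivWithinAt
      · intro t ht
        have ht' := interior_subset ht
        have ht0 : (0:ℝ) < t := by linarith [ht'.1]
        have : Real.log (t + 1) - Real.log t ≤ 1 / t := by
          rw [← Real.log_div (by linarith) ht0.ne']
          have := Real.log_le_sub_one_of_pos (x := (t+1)/t) (by positivity)
          have e : (t + 1) / t - 1 = 1 / t := by field_simp; ring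
          linarith [e ▸ this]
        linarith
    have hGB : G 1 ≤ G B := hGmono (left_mem_Icc.2 hB) (right_mem_Icc.2 hB) hB
    have hG1 : G 1 = -(2 * Real.log 2) := by
      simp [hG]
      ring
    have hB1 : (0:ℝ) < B + 1 := by linarith
    have e2 : 1 - 1 / (B + 1) = B / (B + 1) := by field_simp; ring
    have p2 : (0:ℝ) < B / (B + 1) := div_pos hB0 hB1
    rw [e2, Real.rpow_def_of_pos p2, Real.log_div hB0.ne' hB1.ne']
    have : -(2 * Real.log 2) ≤ (B + 1) * (Real.log B - Real.log (B + 1)) := by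
      rw [hG1] at hGB; exact hGB
    calc (1/4 : ℝ) = Real.exp (-(2 * Real.log 2)) := by
          rw [Real.exp_neg]
          rw [show (2:ℝ) * Real.log 2 = Real.log 4 by
            rw [show (4:ℝ) = 2^(2:ℕ) by norm_num, Real.log_pow]; push_cast; ring]
          rw [Real.exp_log (by norm_num)]
          norm_num
      _ ≤ Real.exp ((Real.log B - Real.log (B + 1)) * (B + 1)) :=
          Real.exp_le_exp.2 (le_of_le_of_eq this (mul_comm _ _))
  have hpos2 : (0:ℝ) ≤ (1 - 1 / (B + 1)) ^ (B + 1) := by positivity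
  rw [hf 1]
  nlinarith [hfac1, hfac2, hpos2]
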